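/- Let a, b, d be complex numbers with a not an integer and d not a nonpositive integer, and extend the Pochhammer symbol by (a)_{-j} = 1/(a-j)_j. Then for all natural numbers m, n, the coefficient identity (a)_{m-n}(b)_m/((d)_m m! n!) = ((a)_m(b)_m/((d)_m m!))·((-1)^n/((1-a)_n n!)) + ∑_{k=1}^{m} ∑_{l=1}^{min(k,n)} (-1)^{k+l} ((k-1)!/((l-1)! l! (k-l)!)) ((b)_k/((1-a)_l (d)_k)) · ((a+k)_{m-k}(b+k)_{m-k}/((d+k)_{m-k}(m-k)!)) · ((-1)^{n-l}/((1-a+l)_{n-l}(n-l)!)) holds; equivalently Η₃(a,b;d;x,y) = F(a,b;d;x)·₀F₁(1-a;-y) + ∑_{k≥1}∑_{l=1}^{k} ((-1)^{k+l}(k-1)! (b)_k /((l-1)! l! (k-l)! (1-a)_l (d)_k)) x^k y^l F(a+k,b+k;d+k;x)·₀F₁(1-a+l;-y) as formal power series. -/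

import Mathlib

open Finset

/-- Pochhammer symbol (rising factorial): `(a)_k = a (a+1) ⋯ (a+k-1)`. -/
noncomputable def poch (a : ℂ) (k : ℕ) : ℂ := ∏ j ∈ Finset.range k, (a + j)

/-- Generalized Pochhammer symbol for integer index:
`(a)_z` is the usual rising factorial for `z ≥ 0`, and `(a)_{-j} = 1/(a-j)_j`. -/
noncomputable def pochZ (a : ℂ) : ℤ → ℂ
  | Int.ofNat k => poch a k
  | Int.negSucc j => 1 / poch (a - (j + 1 : ℕ)) (j + 1)

lemma poch_zero (a : ℂ) : poch a 0 = 1 := Finset.prod_range_zero _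

lemma poch_succ (a : ℂ) (k : ℕ) : poch a (k + 1) = poch a k * (a + k) :=
  Finset.prod_range_succ _ _

lemma poch_add (a : ℂ) (j k : ℕ) : poch a (j + k) = poch a j * poch (a + j) k := by
  unfold poch
  rw [Finset.prod_range_add]
  congr 1
  refine Finset.prod_congr rfl fun i _ => ?_
  push_cast
  ring

lemma poch_split {k m : ℕ} (h : k ≤ m) (a : ℂ) :
    poch a k * poch (a + k) (m - k) = poch a m := by
  rw [← poch_add, Nat.add_sub_cancel' h]

lemma poch_ne_zero {a : ℂ} (h : ∀ j : ℕ, a + j ≠ 0) (k : ℕ) : poch a k ≠ 0 :=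
  Finset.prod_ne_zero_iff.2 fun j _ => h j

lemma poch_one_sub (a : ℂ) (n : ℕ) : poch (1 - a) n = (-1) ^ n * poch (a - n) n := by
  unfold poch
  have h : ∀ j ∈ Finset.range n, (1 - a + (j:ℂ)) = (-1) * (a - n + ((n - 1 - j : ℕ) : ℂ)) := by
    intro j hj
    rw [Finset.mem_range] at hj
    have h1 : ((n - 1 - j : ℕ) : ℂ) = (n : ℂ) - 1 - j := by
      have h2 : n - 1 - j = n - (1 + j) := by omega
      rw [h2, Nat.cast_sub (by omega)]
      push_cast; ring
    rw [h1]; ring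
  rw [Finset.prod_congr rfl h, Finset.prod_mul_distrib, Finset.prod_const, Finset.card_range,
    Finset.prod_range_reflect (fun j => (a - (n:ℂ) + (j:ℂ))) n]

lemma poch_nat (n k : ℕ) : poch (n : ℂ) k = (n.ascFactorial k : ℂ) := by
  induction k with
  | zero => simp [poch_zero]
  | succ k ih => rw [poch_succ, Nat.ascFactorial_succ, ih]; push_cast; ring

lemma poch_nat_choose (n k : ℕ) :
    poch (n : ℂ) k = (k.factorial : ℂ) * ((n + k - 1).choose k : ℂ) := by
  rw [poch_nat, Nat.ascFactorial_eq_factorial_mul_choose']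
  push_cast
  ring

lemma poch_sub_nat_ne_zero {a : ℂ} (ha : ∀ z : ℤ, a ≠ (z : ℂ)) (N k : ℕ) :
    poch (a - N) k ≠ 0 := by
  refine poch_ne_zero (fun j hj => ?_) k
  exact ha ((N : ℤ) - j) (by push_cast; linear_combination hj)

lemma poch_one_sub_add_ne_zero {a : ℂ} (ha : ∀ z : ℤ, a ≠ (z : ℂ)) (l k : ℕ) :
    poch (1 - a + l) k ≠ 0 := by
  refine poch_ne_zero (fun j hj => ?_) k
  exact ha (1 + l + j) (by push_cast; linear_combination -hj)

lemma poch_one_sub_ne_zero {a : ℂ} (ha : ∀ z : ℤ, a ≠ (z : ℂ)) (k : ℕ) :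
    poch (1 - a) k ≠ 0 := by
  have := poch_one_sub_add_ne_zero ha 0 k
  simpa using this

lemma pochZ_mul_poch {a : ℂ} (ha : ∀ z : ℤ, a ≠ (z : ℂ)) (m n : ℕ) :
    pochZ a ((m : ℤ) - n) * poch (a - n) n = poch (a - n) m := by
  rcases le_or_gt n m with h | h
  · have h1 : (m : ℤ) - n = Int.ofNat (m - n) := by
      simp only [Int.ofNat_eq_coe]; omega
    rw [h1]
    show poch a (m - n) * poch (a - n) n = poch (a - n) m
    have h2 : poch (a - n) n * poch ((a - n) + n) (m - n) = poch (a - n) m :=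
      poch_split h (a - n)
    rw [show (a - (n:ℂ)) + (n:ℂ) = a by ring] at h2
    rw [mul_comm]
    exact h2
  · have h1 : (m : ℤ) - n = Int.negSucc (n - m - 1) := by
      rw [Int.negSucc_eq]; push_cast; omega
    rw [h1]
    show (1 / poch (a - ((n - m - 1 : ℕ) + 1 : ℕ)) ((n - m - 1) + 1)) * poch (a - n) n
        = poch (a - n) m
    have e : n - m - 1 + 1 = n - m := by omega
    rw [e]
    have hsplit : poch (a - n) m * poch ((a - n) + m) (n - m) = poch (a - n) n :=
      poch_split h.le (a - n)
    have e2 : (a - (n:ℂ)) + (m:ℂ) = a - ((n - m : ℕ) : ℂ) := by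
      rw [Nat.cast_sub h.le]; ring
    rw [e2] at hsplit
    have hne := poch_sub_nat_ne_zero ha (n - m) (n - m)
    field_simp
    linear_combination -hsplit

lemma key (m : ℕ) : ∀ (n : ℕ) (x : ℂ),
    ∑ k ∈ Finset.range (m + 1),
        (m.choose k : ℂ) * (-1) ^ k * poch (n : ℂ) k * poch (x + k) (m - k)
      = poch (x - n) m := by
  induction m with
  | zero => intro n x; simp [poch_zero]
  | succ m ih =>
    intro n x
    have base : ∑ k ∈ Finset.range (m + 2),
        ((m.choose k : ℂ) * (-1) ^ k * poch (n : ℂ) k * poch (x + k) (m + 1 - k))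
        = (x + m) * poch (x - n) m := by
      rw [Finset.sum_range_succ]
      have hconv : ∀ k ∈ Finset.range (m + 1),
          (m.choose k : ℂ) * (-1) ^ k * poch (n : ℂ) k * poch (x + k) (m + 1 - k)
            = ((m.choose k : ℂ) * (-1) ^ k * poch (n : ℂ) k * poch (x + k) (m - k)) * (x + m) := by
        intro k hk
        rw [Finset.mem_range] at hk
        have hk' : k ≤ m := by omega
        have h1 : m + 1 - k = (m - k) + 1 := by omega
        have h2 : (x + k) + ((m - k : ℕ) : ℂ) = x + m := by
          rw [Nat.cast_sub hk']; ring
        rw [h1, poch_succ, h2]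
        ring
      rw [Finset.sum_congr rfl hconv, ← Finset.sum_mul, ih n x, Nat.choose_succ_self]
      push_cast
      ring
    have hA : (∑ i ∈ Finset.range (m + 1),
        ((m.choose (i + 1) : ℂ) * (-1) ^ (i + 1) * poch (n : ℂ) (i + 1)
          * poch (x + (i + 1 : ℕ)) (m - i))) + poch x (m + 1)
        = (x + m) * poch (x - n) m := by
      rw [← base, Finset.sum_range_succ'
        (fun k => ((m.choose k : ℂ) * (-1) ^ k * poch (n : ℂ) k * poch (x + k) (m + 1 - k)))
        (m + 1)]
      congr 1
      · refine Finset.sum_congr rfl fun i hi => ?_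
        rw [Nat.succ_sub_succ]
      · simp [poch_zero]
    have hB : (∑ i ∈ Finset.range (m + 1),
        ((m.choose i : ℂ) * (-1) ^ (i + 1) * poch (n : ℂ) (i + 1)
          * poch (x + (i + 1 : ℕ)) (m - i)))
        = -(n : ℂ) * poch (x - n) m := by
      have hterm : ∀ i ∈ Finset.range (m + 1),
          (m.choose i : ℂ) * (-1) ^ (i + 1) * poch (n : ℂ) (i + 1)
            * poch (x + (i + 1 : ℕ)) (m - i)
          = (-(n : ℂ)) * ((m.choose i : ℂ) * (-1) ^ i * poch ((n + 1 : ℕ) : ℂ) i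
            * poch ((x + 1) + (i : ℕ)) (m - i)) := by
        intro i hi
        have h1 : poch (n : ℂ) (i + 1) = (n : ℂ) * poch ((n + 1 : ℕ) : ℂ) i := by
          rw [show i + 1 = 1 + i from by omega, poch_add]
          have h2 : poch (n : ℂ) 1 = (n : ℂ) := by simp [poch]
          rw [h2]
          push_cast
          ring_nf
        have h3 : x + ((i + 1 : ℕ) : ℂ) = (x + 1) + (i : ℕ) := by push_cast; ring
        rw [h1, h3]
        ring
      rw [Finset.sum_congr rfl hterm, ← Finset.mul_sum, ih (n + 1) (x + 1)]
      congr 1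
      push_cast
      ring
    rw [Finset.sum_range_succ']
    have hsplit : ∀ i ∈ Finset.range (m + 1),
        ((m + 1).choose (i + 1) : ℂ) * (-1) ^ (i + 1) * poch (n : ℂ) (i + 1)
          * poch (x + (i + 1 : ℕ)) (m + 1 - (i + 1))
        = ((m.choose (i + 1) : ℂ) * (-1) ^ (i + 1) * poch (n : ℂ) (i + 1)
            * poch (x + (i + 1 : ℕ)) (m - i))
          + ((m.choose i : ℂ) * (-1) ^ (i + 1) * poch (n : ℂ) (i + 1)
            * poch (x + (i + 1 : ℕ)) (m - i)) := by
      intro i hi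
      rw [Nat.choose_succ_succ, Nat.succ_sub_succ]
      push_cast
      ring
    rw [Finset.sum_congr rfl hsplit, Finset.sum_add_distrib, hB]
    have hsucc := poch_succ (x - n) m
    have hf0 : ((m + 1).choose 0 : ℂ) * (-1) ^ 0 * poch (n : ℂ) 0 * poch (x + (0 : ℕ)) (m + 1 - 0)
        = poch x (m + 1) := by simp [poch_zero]
    rw [hf0]
    linear_combination hA - hsucc

lemma vand (k n : ℕ) (hk : 1 ≤ k) :
    ∑ l ∈ Finset.Icc 1 (min k n), (k - 1).choose (l - 1) * n.choose l
      = (n + k - 1).choose k := by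
  have h1 : n + k - 1 = n + (k - 1) := by omega
  rw [h1, Nat.add_choose_eq, Finset.Nat.sum_antidiagonal_eq_sum_range_succ_mk]
  have step1 : ∑ l ∈ Finset.Icc 1 (min k n), (k - 1).choose (l - 1) * n.choose l
      = ∑ l ∈ Finset.Icc 1 (min k n), n.choose l * (k - 1).choose (k - l) := by
    refine Finset.sum_congr rfl fun l hl => ?_
    rw [Finset.mem_Icc] at hl
    have e : k - l = (k - 1) - (l - 1) := by omega
    rw [e, Nat.choose_symm (by omega), Nat.mul_comm]
  rw [step1]
  refine Finset.sum_subset ?_ ?_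
  · intro i hi
    rw [Finset.mem_Icc] at hi
    rw [Finset.mem_range]
    omega
  · intro i hi hni
    rw [Finset.mem_range] at hi
    rw [Finset.mem_Icc] at hni
    rcases Nat.eq_zero_or_pos i with h0 | h0
    · subst h0
      have : (k - 1).choose k = 0 := Nat.choose_eq_zero_of_lt (by omega)
      simp [this]
    · have : n.choose i = 0 := Nat.choose_eq_zero_of_lt (by omega)
      simp [this]

/-- Decomposition formula (3.19) for `Η₃(a,b;d;x,y)`, coefficient of `x^m y^n`. -/
theorem H3_decomposition (a b d : ℂ) (ha : ∀ z : ℤ, a ≠ (z : ℂ))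
    (hd : ∀ j : ℕ, d ≠ -(j : ℂ)) (m n : ℕ) :
    pochZ a ((m : ℤ) - n) * poch b m / (poch d m * (m.factorial : ℂ) * (n.factorial : ℂ)) =
      poch a m * poch b m / (poch d m * (m.factorial : ℂ)) *
          ((-1 : ℂ) ^ n / (poch (1 - a) n * (n.factorial : ℂ))) +
        ∑ k ∈ Finset.Icc 1 m, ∑ l ∈ Finset.Icc 1 (min k n),
          (-1 : ℂ) ^ (k + l) *
            (((k - 1).factorial : ℂ) /
              (((l - 1).factorial : ℂ) * (l.factorial : ℂ) * ((k - l).factorial : ℂ))) *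
            (poch b k / (poch (1 - a) l * poch d k)) *
            (poch (a + k) (m - k) * poch (b + k) (m - k) /
              (poch (d + k) (m - k) * ((m - k).factorial : ℂ))) *
            ((-1 : ℂ) ^ (n - l) / (poch (1 - a + l) (n - l) * ((n - l).factorial : ℂ))) := by
  have hfac : ∀ j : ℕ, (j.factorial : ℂ) ≠ 0 := fun j => Nat.cast_ne_zero.2 (Nat.factorial_ne_zero j)
  have hDk : ∀ k j : ℕ, poch (d + k) j ≠ 0 := fun k j =>
    poch_ne_zero (fun i hi => hd (k + i) (by push_cast; linear_combination hi)) j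
  have hD0 : ∀ j : ℕ, poch d j ≠ 0 := fun j =>
    poch_ne_zero (fun i hi => hd i (by linear_combination hi)) j
  have h1a : ∀ j : ℕ, poch (1 - a) j ≠ 0 := poch_one_sub_ne_zero ha
  have h1al : ∀ l j : ℕ, poch (1 - a + l) j ≠ 0 := poch_one_sub_add_ne_zero ha
  have hLHS : pochZ a ((m : ℤ) - n) = (-1 : ℂ)^n * poch (a - n) m / poch (1 - a) n := by
    rw [eq_div_iff (h1a n), poch_one_sub]
    linear_combination ((-1:ℂ))^n * pochZ_mul_poch ha m n
  -- per-summand rewrite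
  have hsummand : ∀ k ∈ Finset.Icc 1 m, ∀ l ∈ Finset.Icc 1 (min k n),
      (-1 : ℂ) ^ (k + l) *
          (((k - 1).factorial : ℂ) /
            (((l - 1).factorial : ℂ) * (l.factorial : ℂ) * ((k - l).factorial : ℂ))) *
          (poch b k / (poch (1 - a) l * poch d k)) *
          (poch (a + k) (m - k) * poch (b + k) (m - k) /
            (poch (d + k) (m - k) * ((m - k).factorial : ℂ))) *
          ((-1 : ℂ) ^ (n - l) / (poch (1 - a + l) (n - l) * ((n - l).factorial : ℂ)))
        = ((-1 : ℂ) ^ (k + n) * (((k - 1).choose (l - 1) : ℕ) : ℂ) * ((n.choose l : ℕ) : ℂ) *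
            ((k.factorial : ℂ) * ((m.choose k : ℕ) : ℂ)) * poch b m * poch (a + k) (m - k))
          / (poch d m * (m.factorial : ℂ) * (n.factorial : ℂ) * poch (1 - a) n) := by
    intro k hk l hl
    rw [Finset.mem_Icc] at hk hl
    obtain ⟨hk1, hk2⟩ := hk
    obtain ⟨hl1, hl2'⟩ := hl
    have hlk : l ≤ k := le_trans hl2' (min_le_left _ _)
    have hln : l ≤ n := le_trans hl2' (min_le_right _ _)
    have hb : poch b k * poch (b + k) (m - k) = poch b m := poch_split hk2 b
    have hdd : poch d k * poch (d + k) (m - k) = poch d m := poch_split hk2 d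
    have haa : poch (1 - a) l * poch (1 - a + l) (n - l) = poch (1 - a) n := poch_split hln (1 - a)
    have hck : ((m.factorial : ℕ) : ℂ)
        = ((m.choose k : ℕ) : ℂ) * (k.factorial : ℂ) * ((m - k).factorial : ℂ) := by
      exact_mod_cast congrArg (Nat.cast : ℕ → ℂ)
        (Nat.choose_mul_factorial_mul_factorial hk2).symm
    have hcl : ((n.factorial : ℕ) : ℂ)
        = ((n.choose l : ℕ) : ℂ) * (l.factorial : ℂ) * ((n - l).factorial : ℂ) := by
      exact_mod_cast congrArg (Nat.cast : ℕ → ℂ)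
        (Nat.choose_mul_factorial_mul_factorial hln).symm
    have hckl : (((k - 1).factorial : ℕ) : ℂ)
        = (((k - 1).choose (l - 1) : ℕ) : ℂ) * (((l - 1).factorial : ℕ) : ℂ)
          * (((k - l).factorial : ℕ) : ℂ) := by
      have e : (k - 1) - (l - 1) = k - l := by omega
      have := (Nat.choose_mul_factorial_mul_factorial (show l - 1 ≤ k - 1 by omega)).symm
      rw [e] at this
      exact_mod_cast congrArg (Nat.cast : ℕ → ℂ) this
    have hsign : ((-1 : ℂ)) ^ (k + n) = (-1 : ℂ) ^ (k + l) * (-1 : ℂ) ^ (n - l) := by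
      rw [← pow_add]
      congr 1
      omega
    have hden : (((l - 1).factorial : ℂ) * (l.factorial : ℂ) * ((k - l).factorial : ℂ) *
        poch (1 - a) l * poch d k * poch (d + k) (m - k) * ((m - k).factorial : ℂ) *
        poch (1 - a + l) (n - l) * ((n - l).factorial : ℂ)) ≠ 0 := by
      refine mul_ne_zero (mul_ne_zero (mul_ne_zero (mul_ne_zero (mul_ne_zero (mul_ne_zero
        (mul_ne_zero (mul_ne_zero (hfac _) (hfac _)) (hfac _)) (h1a _)) (hD0 _))
        (hDk _ _)) (hfac _)) (h1al _ _)) (hfac _)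
    have hW : (poch d m * (m.factorial : ℂ) * (n.factorial : ℂ) * poch (1 - a) n) ≠ 0 :=
      mul_ne_zero (mul_ne_zero (mul_ne_zero (hD0 _) (hfac _)) (hfac _)) (h1a _)
    have hfrac : (-1 : ℂ) ^ (k + l) *
          (((k - 1).factorial : ℂ) /
            (((l - 1).factorial : ℂ) * (l.factorial : ℂ) * ((k - l).factorial : ℂ))) *
          (poch b k / (poch (1 - a) l * poch d k)) *
          (poch (a + k) (m - k) * poch (b + k) (m - k) /
            (poch (d + k) (m - k) * ((m - k).factorial : ℂ))) *
          ((-1 : ℂ) ^ (n - l) / (poch (1 - a + l) (n - l) * ((n - l).factorial : ℂ)))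
        = ((-1 : ℂ) ^ (k + l) * ((k - 1).factorial : ℂ) * poch b k * poch (a + k) (m - k) *
            poch (b + k) (m - k) * (-1 : ℂ) ^ (n - l)) /
          (((l - 1).factorial : ℂ) * (l.factorial : ℂ) * ((k - l).factorial : ℂ) *
            poch (1 - a) l * poch d k * poch (d + k) (m - k) * ((m - k).factorial : ℂ) *
            poch (1 - a + l) (n - l) * ((n - l).factorial : ℂ)) := by
      ring
    rw [hfrac, div_eq_div_iff hden hW]
    rw [← hb, ← hdd, ← haa, hck, hcl, hckl, hsign]
    ring
  have hinner : ∀ k ∈ Finset.Icc 1 m,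
      (∑ l ∈ Finset.Icc 1 (min k n),
        ((-1 : ℂ) ^ (k + n) * (((k - 1).choose (l - 1) : ℕ) : ℂ) * ((n.choose l : ℕ) : ℂ) *
          ((k.factorial : ℂ) * ((m.choose k : ℕ) : ℂ)) * poch b m * poch (a + k) (m - k)))
      = ((m.choose k : ℕ) : ℂ) * (-1) ^ k * poch (n : ℂ) k * poch (a + k) (m - k)
        * ((-1 : ℂ) ^ n * poch b m) := by
    intro k hk
    rw [Finset.mem_Icc] at hk
    have step : ∀ l ∈ Finset.Icc 1 (min k n),
        (-1 : ℂ) ^ (k + n) * (((k - 1).choose (l - 1) : ℕ) : ℂ) * ((n.choose l : ℕ) : ℂ) *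
          ((k.factorial : ℂ) * ((m.choose k : ℕ) : ℂ)) * poch b m * poch (a + k) (m - k)
        = ((((k - 1).choose (l - 1) * n.choose l : ℕ)) : ℂ) *
          ((-1 : ℂ) ^ (k + n) * ((k.factorial : ℂ) * ((m.choose k : ℕ) : ℂ)) * poch b m *
            poch (a + k) (m - k)) := by
      intro l hl
      push_cast
      ring
    rw [Finset.sum_congr rfl step, ← Finset.sum_mul, ← Nat.cast_sum, vand k n hk.1,
      poch_nat_choose n k, pow_add]
    ring
  have hrange : Finset.range (m + 1) = insert 0 (Finset.Icc 1 m) := by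
    ext i
    simp only [Finset.mem_range, Finset.mem_Icc, Finset.mem_insert]
    omega
  have hnum : (∑ k ∈ Finset.Icc 1 m, (((m.choose k : ℕ) : ℂ) * (-1) ^ k * poch (n : ℂ) k *
        poch (a + k) (m - k) * ((-1 : ℂ) ^ n * poch b m)))
      = (-1 : ℂ) ^ n * poch (a - n) m * poch b m - (-1 : ℂ) ^ n * poch a m * poch b m := by
    have hk := key m n a
    rw [hrange, Finset.sum_insert (by simp)] at hk
    simp only [Nat.choose_zero_right, pow_zero, Nat.cast_zero, add_zero, Nat.sub_zero,
      Nat.cast_one, one_mul, mul_one, poch_zero] at hk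
    have expand : ∀ k ∈ Finset.Icc 1 m,
        (((m.choose k : ℕ) : ℂ) * (-1) ^ k * poch (n : ℂ) k * poch (a + k) (m - k) *
          ((-1 : ℂ) ^ n * poch b m))
        = (((m.choose k : ℕ) : ℂ) * (-1) ^ k * poch (n : ℂ) k * poch (a + k) (m - k)) *
          ((-1 : ℂ) ^ n * poch b m) := fun k hk => by ring
    rw [Finset.sum_congr rfl expand, ← Finset.sum_mul]
    linear_combination ((-1 : ℂ)) ^ n * poch b m * hk
  rw [hLHS, Finset.sum_congr rfl (fun k hk => Finset.sum_congr rfl (hsummand k hk))]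
  have hcol : ∀ k ∈ Finset.Icc 1 m,
      (∑ l ∈ Finset.Icc 1 (min k n),
        ((-1 : ℂ) ^ (k + n) * (((k - 1).choose (l - 1) : ℕ) : ℂ) * ((n.choose l : ℕ) : ℂ) *
            ((k.factorial : ℂ) * ((m.choose k : ℕ) : ℂ)) * poch b m * poch (a + k) (m - k))
          / (poch d m * (m.factorial : ℂ) * (n.factorial : ℂ) * poch (1 - a) n))
      = (((m.choose k : ℕ) : ℂ) * (-1) ^ k * poch (n : ℂ) k * poch (a + k) (m - k)
          * ((-1 : ℂ) ^ n * poch b m))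
        / (poch d m * (m.factorial : ℂ) * (n.factorial : ℂ) * poch (1 - a) n) := by
    intro k hk
    rw [← Finset.sum_div, hinner k hk]
  rw [Finset.sum_congr rfl hcol, ← Finset.sum_div, hnum]
  have final : ∀ (P Am B Da Fm Fn Aa : ℂ), Aa ≠ 0 → Da ≠ 0 → Fm ≠ 0 → Fn ≠ 0 →
      (-1 : ℂ) ^ n * P / Aa * B / (Da * Fm * Fn)
        = Am * B / (Da * Fm) * ((-1 : ℂ) ^ n / (Aa * Fn)) +
          ((-1 : ℂ) ^ n * P * B - (-1 : ℂ) ^ n * Am * B) / (Da * Fm * Fn * Aa) := by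
    intro P Am B Da Fm Fn Aa h1 h2 h3 h4
    have e1 : (-1 : ℂ) ^ n * P / Aa * B / (Da * Fm * Fn)
        = ((-1 : ℂ) ^ n * P * B) / (Da * Fm * Fn * Aa) := by ring
    have e2 : Am * B / (Da * Fm) * ((-1 : ℂ) ^ n / (Aa * Fn))
        = ((-1 : ℂ) ^ n * Am * B) / (Da * Fm * Fn * Aa) := by ring
    rw [e1, e2, ← add_div]
    congr 1
    ring
  exact final (poch (a - n) m) (poch a m) (poch b m) (poch d m) (m.factorial : ℂ)
    (n.factorial : ℂ) (poch (1 - a) n) (h1a n) (hD0 m) (hfac m) (hfac n)
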